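/- Let X : ℝⁿ → ℝⁿ be a locally Lipschitz vector field, h : ℝⁿ → ℝ continuously differentiable, and let C = {x ∈ ℝⁿ : h(x) ≥ 0}. Let α : ℝ → ℝ be locally Lipschitz, strictly increasing, with α(0) = 0, and let D ⊆ ℝⁿ be an open set containing C such that ⟨∇h(x), X(x)⟩ ≥ -α(h(x)) for all x ∈ D. Then for every T ∈ (0, ∞] and every differentiable curve x : [0, T) → D with x'(t) = X(x(t)) for all t ∈ [0, T) and h(x(0)) ≥ 0, one has h(x(t)) ≥ 0 (equivalently x(t) ∈ C) for all t ∈ [0, T). -/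

import Mathlib

open scoped RealInnerProductSpace ENNReal

/-- Euclidean form of condition (ii) of the paper's Theorem 1: a barrier inequality
`⟨∇h, X⟩ ≥ -α(h)` on an open set `D ⊇ C = {h ≥ 0}` renders `C` forward invariant
for the locally Lipschitz vector field `X`, along solutions remaining in `D`. -/
theorem stmt_2 (n : ℕ)
    (X : EuclideanSpace ℝ (Fin n) → EuclideanSpace ℝ (Fin n))
    (h : EuclideanSpace ℝ (Fin n) → ℝ)
    (hX : LocallyLipschitz X)
    (hh : ContDiff ℝ 1 h)
    (C D : Set (EuclideanSpace ℝ (Fin n)))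
    (hC : C = {x | 0 ≤ h x})
    (α : ℝ → ℝ)
    (hα : LocallyLipschitz α) (hmono : StrictMono α) (hα0 : α 0 = 0)
    (hD : IsOpen D) (hCD : C ⊆ D)
    (hbar : ∀ x ∈ D, ⟪gradient h x, X x⟫ ≥ -α (h x))
    (T : ℝ≥0∞) (hT : 0 < T)
    (x : ℝ → EuclideanSpace ℝ (Fin n))
    (hxD : ∀ t : ℝ, 0 ≤ t → ENNReal.ofReal t < T → x t ∈ D)
    (hx : ∀ t : ℝ, 0 ≤ t → ENNReal.ofReal t < T → HasDerivAt x (X (x t)) t)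
    (hx0 : 0 ≤ h (x 0)) :
    ∀ t : ℝ, 0 ≤ t → ENNReal.ofReal t < T → x t ∈ C := by
  intro t₁ ht₁ ht₁T
  rw [hC]
  by_contra hneg
  simp only [Set.mem_setOf_eq, not_le] at hneg
  set f : ℝ → ℝ := fun t => h (x t) with hf
  have hlt : ∀ t, 0 ≤ t → t ≤ t₁ → ENNReal.ofReal t < T := fun t ht htt₁ =>
    lt_of_le_of_lt (ENNReal.ofReal_le_ofReal htt₁) ht₁T
  -- derivative of f
  have hder : ∀ t, 0 ≤ t → t ≤ t₁ →
      HasDerivAt f (⟪gradient h (x t), X (x t)⟫) t := by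
    intro t ht htt₁
    have hdh : DifferentiableAt ℝ h (x t) := (hh.differentiable one_ne_zero).differentiableAt
    have hcomp := hdh.hasFDerivAt.comp_hasDerivAt t (hx t ht (hlt t ht htt₁))
    have hgrad : ⟪gradient h (x t), X (x t)⟫ = fderiv ℝ h (x t) (X (x t)) := by
      rw [gradient, InnerProductSpace.toDual_symm_apply]
    rw [hgrad]
    exact hcomp
  have hcontf : ContinuousOn f (Set.Icc 0 t₁) := fun t ht =>
    (hder t ht.1 ht.2).continuousAt.continuousWithinAt
  -- define s = last time in [0,t₁] where f ≥ 0
  set A : Set ℝ := Set.Icc (0:ℝ) t₁ ∩ f ⁻¹' (Set.Ici 0) with hA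
  have hAne : A.Nonempty := ⟨0, ⟨le_rfl, ht₁⟩, hx0⟩
  have hAbdd : BddAbove A := ⟨t₁, fun t ht => ht.1.2⟩
  have hAclosed : IsClosed A :=
    hcontf.preimage_isClosed_of_isClosed isClosed_Icc isClosed_Ici
  set s := sSup A with hs
  have hsA : s ∈ A := hAclosed.csSup_mem hAne hAbdd
  have hs0 : 0 ≤ s := hsA.1.1
  have hst₁ : s ≤ t₁ := hsA.1.2
  have hfs : 0 ≤ f s := hsA.2
  have hslt : s < t₁ := lt_of_le_of_ne hst₁ (fun he => by
    rw [he] at hfs; exact absurd hneg (not_lt.mpr hfs))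
  -- on (s, t₁], f is negative
  have hfneg : ∀ t, s < t → t ≤ t₁ → f t < 0 := by
    intro t hst htt₁
    by_contra hge
    push_neg at hge
    exact absurd (le_csSup hAbdd ⟨⟨le_trans hs0 hst.le, htt₁⟩, hge⟩) (not_le.mpr hst)
  -- f is strictly monotone on [s, t₁] since f' > 0 on the interior
  have hmonoF : StrictMonoOn f (Set.Icc s t₁) := by
    apply strictMonoOn_of_deriv_pos (convex_Icc s t₁)
    · exact hcontf.mono (Set.Icc_subset_Icc hs0 le_rfl)
    · intro t ht
      rw [interior_Icc] at ht
      have ht0 : 0 ≤ t := le_trans hs0 ht.1.le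
      have hdt := hder t ht0 ht.2.le
      rw [hdt.deriv]
      have hxtD : x t ∈ D := hxD t ht0 (hlt t ht0 ht.2.le)
      have hb := hbar (x t) hxtD
      have : -α (f t) > 0 := by
        have := hmono (hfneg t ht.1 ht.2.le)
        rw [hα0] at this
        linarith
      linarith [hb]
  have := hmonoF (Set.left_mem_Icc.mpr hst₁) (Set.right_mem_Icc.mpr hst₁) hslt
  linarith
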